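/- Let g ∈ F_q[x] with gcd(g, x^k − 1) = 1 and L_g its q-associate. Let α ∈ F_{q^k} have F_q-order h ∈ F_q[x] (the minimal monic polynomial with L_h(α) = 0). Then the least positive integer j with L_g^{(j)}(α) = α equals the multiplicative order of g modulo h, i.e., the least j > 0 with g^j ≡ 1 (mod h) in F_q[x]. -/

import Mathlib

open Polynomial

/-- Evaluation of the `q`-associate (linearized) polynomial `L_g(x) = Σ aᵢ x^{qⁱ}` at `α`. -/
noncomputable def qAssocEval (F : Type*) [Field F] [Fintype F]
    (E : Type*) [Field E] [Algebra F E] (g : Polynomial F) (α : E) : E :=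
  ∑ i ∈ Finset.range (g.natDegree + 1), g.coeff i • α ^ (Fintype.card F) ^ i

section Aux

variable (F : Type*) [Field F] [Fintype F] (E : Type*) [Field E] [Algebra F E]

/-- The `q`-power Frobenius as an `F`-linear endomorphism of `E`. -/
noncomputable def frobLin : E →ₗ[F] E where
  toFun x := x ^ Fintype.card F
  map_add' x y := by
    haveI : CharP F (ringChar F) := ringChar.charP F
    haveI : Fact (Nat.Prime (ringChar F)) := ⟨CharP.char_is_prime F _⟩
    obtain ⟨n, hp, hcard⟩ := FiniteField.card F (ringChar F)
    haveI : CharP E (ringChar F) := charP_of_injective_algebraMap (algebraMap F E).injective _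
    haveI : ExpChar E (ringChar F) := ExpChar.prime hp
    show (x + y) ^ Fintype.card F = x ^ Fintype.card F + y ^ Fintype.card F
    rw [hcard, add_pow_char_pow]
  map_smul' c x := by
    simp only [Algebra.smul_def, mul_pow, RingHom.id_apply, ← map_pow, FiniteField.pow_card]

lemma qAssocEval_eq (g : Polynomial F) (α : E) :
    qAssocEval F E g α = Polynomial.aeval (frobLin F E : Module.End F E) g α := by
  rw [Polynomial.aeval_eq_sum_range, qAssocEval]
  simp only [LinearMap.sum_apply, LinearMap.smul_apply, Module.End.pow_apply]
  have hfr : ⇑(frobLin F E : E →ₗ[F] E) = fun x : E => x ^ Fintype.card F := rfl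
  simp only [hfr, pow_iterate]

end Aux

/-- the period of `α` under `L_g` equals the multiplicative order of `g`
modulo the `F_q`-order `h` of `α`: for each `j > 0`, `L_g^{(j)}(α) = α` iff
`g^j ≡ 1 (mod h)`. -/
theorem stmt_17 (F : Type*) [Field F] [Fintype F]
    (E : Type*) [Field E] [Algebra F E] [Fintype E]
    (k : ℕ) (hk : 0 < k) (hE : Fintype.card E = Fintype.card F ^ k)
    (g : Polynomial F) (hcop : IsCoprime g (Polynomial.X ^ k - 1))
    (α : E)
    (h : Polynomial F) (hmonic : h.Monic) (hann : qAssocEval F E h α = 0)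
    (hmin : ∀ m : Polynomial F, m.Monic → qAssocEval F E m α = 0 → h.degree ≤ m.degree) :
    ∀ j : ℕ, 0 < j → ((qAssocEval F E g)^[j] α = α ↔ h ∣ g ^ j - 1) := by
  set φ : Module.End F E := (frobLin F E : Module.End F E) with hφ
  have key : ∀ (m : Polynomial F) (β : E), qAssocEval F E m β = Polynomial.aeval φ m β :=
    fun m β => qAssocEval_eq F E m β
  have hann' : Polynomial.aeval φ h α = 0 := by rw [← key]; exact hann
  -- any annihilator of α is divisible by h
  have hdvd : ∀ m : Polynomial F, Polynomial.aeval φ m α = 0 → h ∣ m := by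
    intro m hm
    rw [← Polynomial.modByMonic_eq_zero_iff_dvd hmonic]
    by_contra hr0
    set r := m %ₘ h with hrdef
    have hrann : Polynomial.aeval φ r α = 0 := by
      have hdec := Polynomial.modByMonic_add_div m h
      have : Polynomial.aeval φ (r + h * (m /ₘ h)) α = 0 := by rw [hdec]; exact hm
      rw [map_add, LinearMap.add_apply, mul_comm, map_mul, Module.End.mul_apply,
        hann', map_zero, add_zero] at this
      exact this
    set r' := r * C r.leadingCoeff⁻¹ with hr'def
    have hr'monic : r'.Monic := Polynomial.monic_mul_leadingCoeff_inv hr0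
    have hr'ann : Polynomial.aeval φ r' α = 0 := by
      rw [hr'def, mul_comm, map_mul, Module.End.mul_apply, hrann, map_zero]
    have hle : h.degree ≤ r'.degree := by
      apply hmin r' hr'monic
      rw [key]; exact hr'ann
    have hdeg : r'.degree = r.degree := Polynomial.degree_mul_leadingCoeff_inv r hr0
    have hlt : r.degree < h.degree := Polynomial.degree_modByMonic_lt m hmonic
    rw [hdeg] at hle
    exact absurd (lt_of_le_of_lt hle hlt) (lt_irrefl _)
  -- iterate formula
  have hiter : ∀ j : ℕ, (qAssocEval F E g)^[j] α = Polynomial.aeval φ (g ^ j) α := by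
    intro j
    induction j with
    | zero => simp
    | succ n ih =>
        rw [Function.iterate_succ_apply', ih, key, pow_succ', map_mul,
          Module.End.mul_apply]
  intro j hj
  constructor
  · intro hfix
    rw [hiter] at hfix
    apply hdvd
    rw [map_sub, LinearMap.sub_apply, map_one, Module.End.one_apply, hfix, sub_self]
  · rintro ⟨s, hs⟩
    rw [hiter]
    have : (g ^ j : Polynomial F) = s * h + 1 := by
      rw [mul_comm s h, ← hs]; ring
    rw [this, map_add, LinearMap.add_apply, map_mul, Module.End.mul_apply, hann',
      map_zero, map_one, Module.End.one_apply, zero_add]
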